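/- There exists an absolute constant C > 0 such that for every ξ = (ξ₁, ξ₂) ∈ ℝ² satisfying |ξ|² < 2|ξ₁| and |ξ₁| ≤ |ξ|², and every t ≥ 0: |ξ₁ (e^{λ₋ t} − e^{λ₊ t})/(λ₊ − λ₋)| ≤ C e^{−|ξ|² t/4} and |(λ₋ e^{λ₋ t} − λ₊ e^{λ₊ t})/(λ₊ − λ₋)| ≤ C e^{−|ξ|² t/4}. -/

import Mathlib

lemma aux_exp (x : ℝ) (hx : 0 ≤ x) : x * Real.exp (-x/2) ≤ 2 * Real.exp (-x/4) := by
  have h1 : x/8 + 1 ≤ Real.exp (x/8) := Real.add_one_le_exp (x/8)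
  have h2 : Real.exp (x/8) * Real.exp (x/8) = Real.exp (x/4) := by
    rw [← Real.exp_add]; ring_nf
  have hkey : x ≤ 2 * Real.exp (x/4) := by nlinarith [Real.exp_pos (x/8), sq_nonneg (x-8)]
  calc x * Real.exp (-x/2) ≤ (2 * Real.exp (x/4)) * Real.exp (-x/2) :=
        mul_le_mul_of_nonneg_right hkey (Real.exp_pos _).le
    _ = 2 * Real.exp (-x/4) := by rw [mul_assoc, ← Real.exp_add]; ring_nf


/-- `λ₊ = -|ξ|²/2 + (i/2)√(4ξ₁² - |ξ|⁴)` if `|ξ|⁴ ≤ 4ξ₁²`, and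
`λ₊ = -|ξ|²/2 + (1/2)√(|ξ|⁴ - 4ξ₁²)` otherwise. -/
noncomputable def lamPlus (ξ₁ ξ₂ : ℝ) : ℂ :=
  if (ξ₁ ^ 2 + ξ₂ ^ 2) ^ 2 ≤ 4 * ξ₁ ^ 2 then
    ((-(ξ₁ ^ 2 + ξ₂ ^ 2) / 2 : ℝ) : ℂ)
      + (Complex.I / 2) * ((Real.sqrt (4 * ξ₁ ^ 2 - (ξ₁ ^ 2 + ξ₂ ^ 2) ^ 2) : ℝ) : ℂ)
  else
    ((-(ξ₁ ^ 2 + ξ₂ ^ 2) / 2 : ℝ) : ℂ)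
      + (1 / 2 : ℂ) * ((Real.sqrt ((ξ₁ ^ 2 + ξ₂ ^ 2) ^ 2 - 4 * ξ₁ ^ 2) : ℝ) : ℂ)

/-- `λ₋ = -|ξ|²/2 - (i/2)√(4ξ₁² - |ξ|⁴)` if `|ξ|⁴ ≤ 4ξ₁²`, and
`λ₋ = -|ξ|²/2 - (1/2)√(|ξ|⁴ - 4ξ₁²)` otherwise. -/
noncomputable def lamMinus (ξ₁ ξ₂ : ℝ) : ℂ :=
  if (ξ₁ ^ 2 + ξ₂ ^ 2) ^ 2 ≤ 4 * ξ₁ ^ 2 then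
    ((-(ξ₁ ^ 2 + ξ₂ ^ 2) / 2 : ℝ) : ℂ)
      - (Complex.I / 2) * ((Real.sqrt (4 * ξ₁ ^ 2 - (ξ₁ ^ 2 + ξ₂ ^ 2) ^ 2) : ℝ) : ℂ)
  else
    ((-(ξ₁ ^ 2 + ξ₂ ^ 2) / 2 : ℝ) : ℂ)
      - (1 / 2 : ℂ) * ((Real.sqrt ((ξ₁ ^ 2 + ξ₂ ^ 2) ^ 2 - 4 * ξ₁ ^ 2) : ℝ) : ℂ)

/-- There is an absolute constant `C > 0` such that whenever `|ξ|² < 2|ξ₁|` and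
`|ξ₁| ≤ |ξ|²`, for all `t ≥ 0`:
`|ξ₁ (e^{λ₋ t} - e^{λ₊ t})/(λ₊ - λ₋)| ≤ C e^{-|ξ|² t/4}` and
`|(λ₋ e^{λ₋ t} - λ₊ e^{λ₊ t})/(λ₊ - λ₋)| ≤ C e^{-|ξ|² t/4}`. -/
theorem stmt_5 : ∃ C : ℝ, 0 < C ∧ ∀ ξ₁ ξ₂ : ℝ,
    ξ₁ ^ 2 + ξ₂ ^ 2 < 2 * |ξ₁| → |ξ₁| ≤ ξ₁ ^ 2 + ξ₂ ^ 2 → ∀ t : ℝ, 0 ≤ t →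
    ‖(ξ₁ : ℂ) * (Complex.exp (lamMinus ξ₁ ξ₂ * (t : ℂ))
          - Complex.exp (lamPlus ξ₁ ξ₂ * (t : ℂ)))
        / (lamPlus ξ₁ ξ₂ - lamMinus ξ₁ ξ₂)‖
      ≤ C * Real.exp (-(ξ₁ ^ 2 + ξ₂ ^ 2) * t / 4) ∧
    ‖(lamMinus ξ₁ ξ₂ * Complex.exp (lamMinus ξ₁ ξ₂ * (t : ℂ))
          - lamPlus ξ₁ ξ₂ * Complex.exp (lamPlus ξ₁ ξ₂ * (t : ℂ)))
        / (lamPlus ξ₁ ξ₂ - lamMinus ξ₁ ξ₂)‖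
      ≤ C * Real.exp (-(ξ₁ ^ 2 + ξ₂ ^ 2) * t / 4) := by
  refine ⟨3, by norm_num, ?_⟩
  intro ξ₁ ξ₂ hlt hle t ht
  set a : ℝ := ξ₁ ^ 2 + ξ₂ ^ 2 with ha_def
  have haξ : |ξ₁| ≤ a := hle
  have hξpos : 0 < |ξ₁| := by
    rcases lt_or_ge 0 |ξ₁| with h | h
    · exact h
    · exfalso; have : |ξ₁| = 0 := le_antisymm h (abs_nonneg _); nlinarith [abs_nonneg ξ₁]
  have hapos : 0 < a := lt_of_lt_of_le hξpos haξ
  have hstrict : a ^ 2 < 4 * ξ₁ ^ 2 := by nlinarith [sq_abs ξ₁, abs_nonneg ξ₁]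
  have hcond : a ^ 2 ≤ 4 * ξ₁ ^ 2 := hstrict.le
  set ω : ℝ := Real.sqrt (4 * ξ₁ ^ 2 - a ^ 2) with hω_def
  have hω2 : ω ^ 2 = 4 * ξ₁ ^ 2 - a ^ 2 := Real.sq_sqrt (by linarith)
  have hωpos : 0 < ω := Real.sqrt_pos.mpr (by linarith)
  have hlp : lamPlus ξ₁ ξ₂ = ((-(a) / 2 : ℝ) : ℂ) + (Complex.I / 2) * (ω : ℂ) := by
    rw [lamPlus, if_pos hcond]
  have hlm : lamMinus ξ₁ ξ₂ = ((-(a) / 2 : ℝ) : ℂ) - (Complex.I / 2) * (ω : ℂ) := by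
    rw [lamMinus, if_pos hcond]
  set s : ℝ := ω * t / 2 with hs_def
  have hspos : 0 ≤ s := by positivity
  have hep : Complex.exp (lamPlus ξ₁ ξ₂ * (t : ℂ))
      = (Real.exp (-(a*t)/2) : ℂ) * ((Real.cos s : ℂ) + (Real.sin s : ℂ) * Complex.I) := by
    have h : lamPlus ξ₁ ξ₂ * (t : ℂ) = ((-(a*t)/2 : ℝ) : ℂ) + ((s : ℝ) : ℂ) * Complex.I := by
      rw [hlp, hs_def]; push_cast; ring
    rw [h, Complex.exp_add, Complex.exp_mul_I, ← Complex.ofReal_exp,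
      ← Complex.ofReal_cos, ← Complex.ofReal_sin]
  have hem : Complex.exp (lamMinus ξ₁ ξ₂ * (t : ℂ))
      = (Real.exp (-(a*t)/2) : ℂ) * ((Real.cos s : ℂ) - (Real.sin s : ℂ) * Complex.I) := by
    have h : lamMinus ξ₁ ξ₂ * (t : ℂ) = ((-(a*t)/2 : ℝ) : ℂ) + (((-s : ℝ)) : ℂ) * Complex.I := by
      rw [hlm, hs_def]; push_cast; ring
    rw [h, Complex.exp_add, Complex.exp_mul_I, ← Complex.ofReal_exp,
      ← Complex.ofReal_cos, ← Complex.ofReal_sin, Real.cos_neg, Real.sin_neg]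
    push_cast; ring
  have hdiff : lamPlus ξ₁ ξ₂ - lamMinus ξ₁ ξ₂ = Complex.I * (ω : ℂ) := by
    rw [hlp, hlm]; ring
  have hωC : (ω : ℂ) ≠ 0 := by exact_mod_cast hωpos.ne'
  have hIne : Complex.I * (ω : ℂ) ≠ 0 := mul_ne_zero Complex.I_ne_zero hωC
  have hsin : |Real.sin s| ≤ s := (Real.abs_sin_le_abs).trans (le_of_eq (abs_of_nonneg hspos))
  have hE : Real.exp (-(a*t)/2) = Real.exp (-(a*t)/2) := rfl
  -- first bound
  have e1 : ((ξ₁ : ℂ) * (Complex.exp (lamMinus ξ₁ ξ₂ * (t : ℂ))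
          - Complex.exp (lamPlus ξ₁ ξ₂ * (t : ℂ)))
        / (lamPlus ξ₁ ξ₂ - lamMinus ξ₁ ξ₂))
      = ((ξ₁ * Real.exp (-(a*t)/2) * (-2 * Real.sin s) / ω : ℝ) : ℂ) := by
    rw [hem, hep, hdiff]
    push_cast
    rw [div_eq_div_iff hIne hωC]
    ring
  have e2 : ((lamMinus ξ₁ ξ₂ * Complex.exp (lamMinus ξ₁ ξ₂ * (t : ℂ))
          - lamPlus ξ₁ ξ₂ * Complex.exp (lamPlus ξ₁ ξ₂ * (t : ℂ)))
        / (lamPlus ξ₁ ξ₂ - lamMinus ξ₁ ξ₂))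
      = ((Real.exp (-(a*t)/2) * (a * Real.sin s - ω * Real.cos s) / ω : ℝ) : ℂ) := by
    rw [hem, hep, hdiff, hlp, hlm]
    push_cast
    rw [div_eq_div_iff hIne hωC]
    ring_nf
  have hexp_eq : Real.exp (-a * t / 4) = Real.exp (-(a*t)/4) := by ring_nf
  have hEle : Real.exp (-(a*t)/2) ≤ Real.exp (-(a*t)/4) := by
    apply Real.exp_le_exp.mpr; nlinarith [mul_nonneg hapos.le ht]
  have haux := aux_exp (a*t) (mul_nonneg hapos.le ht)
  have hEpos : 0 < Real.exp (-(a*t)/2) := Real.exp_pos _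
  constructor
  · rw [e1, Complex.norm_real, Real.norm_eq_abs, hexp_eq]
    have : |ξ₁ * Real.exp (-(a*t)/2) * (-2 * Real.sin s) / ω|
        ≤ a * t * Real.exp (-(a*t)/2) := by
      rw [abs_div, abs_mul, abs_mul, abs_of_pos hωpos, abs_of_pos hEpos,
        div_le_iff₀ hωpos]
      have h2s : |(-2 : ℝ) * Real.sin s| ≤ ω * t := by
        rw [abs_mul]
        calc |(-2:ℝ)| * |Real.sin s| ≤ 2 * s := by
              rw [abs_neg, abs_two]; linarith [mul_le_mul_of_nonneg_left hsin (by norm_num : (0:ℝ) ≤ 2)]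
          _ = ω * t := by rw [hs_def]; ring
      calc |ξ₁| * Real.exp (-(a*t)/2) * |(-2:ℝ) * Real.sin s|
          ≤ a * Real.exp (-(a*t)/2) * (ω * t) := by
            apply mul_le_mul (mul_le_mul_of_nonneg_right haξ hEpos.le) h2s (abs_nonneg _)
              (by positivity)
        _ = a * t * Real.exp (-(a*t)/2) * ω := by ring
    calc |ξ₁ * Real.exp (-(a*t)/2) * (-2 * Real.sin s) / ω|
        ≤ a * t * Real.exp (-(a*t)/2) := this
      _ = (a*t) * Real.exp (-(a*t)/2) := by ring
      _ ≤ 2 * Real.exp (-(a*t)/4) := haux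
      _ ≤ 3 * Real.exp (-(a*t)/4) := by nlinarith [Real.exp_pos (-(a*t)/4)]
  · rw [e2, Complex.norm_real, Real.norm_eq_abs, hexp_eq]
    have hbound : |Real.exp (-(a*t)/2) * (a * Real.sin s - ω * Real.cos s) / ω|
        ≤ Real.exp (-(a*t)/2) * (a * t / 2 + 1) := by
      rw [abs_div, abs_mul, abs_of_pos hEpos, abs_of_pos hωpos, div_le_iff₀ hωpos]
      have h1 : |a * Real.sin s - ω * Real.cos s| ≤ a * s + ω := by
        calc |a * Real.sin s - ω * Real.cos s| ≤ |a * Real.sin s| + |ω * Real.cos s| :=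
              abs_sub _ _
          _ ≤ a * s + ω * 1 := by
              rw [abs_mul, abs_mul, abs_of_pos hapos, abs_of_pos hωpos]
              have := Real.abs_cos_le_one s
              gcongr
          _ = a * s + ω := by ring
      calc Real.exp (-(a*t)/2) * |a * Real.sin s - ω * Real.cos s|
          ≤ Real.exp (-(a*t)/2) * (a * s + ω) := by gcongr
        _ = Real.exp (-(a*t)/2) * (a * t / 2 + 1) * ω := by rw [hs_def]; ring
    calc |Real.exp (-(a*t)/2) * (a * Real.sin s - ω * Real.cos s) / ω|
        ≤ Real.exp (-(a*t)/2) * (a * t / 2 + 1) := hbound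
      _ = (a*t) * Real.exp (-(a*t)/2) / 2 + Real.exp (-(a*t)/2) := by ring
      _ ≤ 2 * Real.exp (-(a*t)/4) / 2 + Real.exp (-(a*t)/4) := by gcongr ?_ + ?_ <;> linarith
      _ ≤ 3 * Real.exp (-(a*t)/4) := by nlinarith [Real.exp_pos (-(a*t)/4)]
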